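/- Let A ∈ ℝ₊^{m×n}, d ∈ ℝⁿ with d_j > 0, and for each j define β_j = max( max_i a_{ij}, 1/d_j ); assume 0 < β_j < ∞ and let β = min_j β_j, γ = max_j β_j. For any x ∈ {0,1}ⁿ \ {0}, the LP value z*(x) = max{ xᵀu : u ∈ ℝ₊ⁿ, Au ≤ 1_m, u ≤ d } satisfies 1/γ ≤ z*(x) ≤ (m+n)/β. -/
import Mathlib


/-- Bounds on the LP value z*(x) = max{xᵀu : u ≥ 0, Au ≤ 1_m, u ≤ d} for binary
nonzero x: every feasible u has xᵀu ≤ (m+n)/β, and some feasible u has xᵀu ≥ 1/γ,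
where β = min_j β_j, γ = max_j β_j and β_j = max(max_i a_{ij}, 1/d_j). -/
theorem stmt_4 {m n : ℕ} (hm : 0 < m) (hn : 0 < n)
    (A : Matrix (Fin m) (Fin n) ℝ) (hA : ∀ i j, 0 ≤ A i j)
    (d : Fin n → ℝ) (hd : ∀ j, 0 < d j)
    (x : Fin n → ℝ) (hx : ∀ j, x j = 0 ∨ x j = 1) (hx0 : x ≠ 0)
    (βj : Fin n → ℝ)
    (hβj : ∀ j, βj j =
      max (Finset.univ.sup' ⟨⟨0, hm⟩, Finset.mem_univ _⟩ fun i => A i j) (1 / d j))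
    (β γ : ℝ)
    (hβ : β = Finset.univ.inf' ⟨⟨0, hn⟩, Finset.mem_univ _⟩ βj)
    (hγ : γ = Finset.univ.sup' ⟨⟨0, hn⟩, Finset.mem_univ _⟩ βj) :
    (∀ u : Fin n → ℝ, (∀ j, 0 ≤ u j) → (∀ i, ∑ j, A i j * u j ≤ 1) →
      (∀ j, u j ≤ d j) → ∑ j, x j * u j ≤ (m + n) / β) ∧
    (∃ u : Fin n → ℝ, (∀ j, 0 ≤ u j) ∧ (∀ i, ∑ j, A i j * u j ≤ 1) ∧
      (∀ j, u j ≤ d j) ∧ 1 / γ ≤ ∑ j, x j * u j) := by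
  have hβjpos : ∀ j, 0 < βj j := fun j => by
    rw [hβj j]
    exact lt_of_lt_of_le (one_div_pos.2 (hd j)) (le_max_right _ _)
  have hβle : ∀ j, β ≤ βj j := fun j => hβ ▸ Finset.inf'_le _ (Finset.mem_univ j)
  have hγge : ∀ j, βj j ≤ γ := fun j => hγ ▸ Finset.le_sup' _ (Finset.mem_univ j)
  have hβpos : 0 < β := by
    rw [hβ]
    exact (Finset.lt_inf'_iff _).2 fun j _ => hβjpos j
  constructor
  · intro u hu hAu hud
    have key : ∀ j, u j ≤ 1 / β := by
      intro j
      have h1 : u j ≤ 1 / βj j := by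
        rcases le_total (Finset.univ.sup' ⟨⟨0, hm⟩, Finset.mem_univ _⟩ fun i => A i j)
            (1 / d j) with h | h
        · have heq : βj j = 1 / d j := by rw [hβj j, max_eq_right h]
          rw [heq, one_div_one_div]
          exact hud j
        · have hbe : βj j = Finset.univ.sup' ⟨⟨0, hm⟩, Finset.mem_univ _⟩ fun i => A i j := by
            rw [hβj j, max_eq_left h]
          obtain ⟨i0, -, hi0⟩ := Finset.exists_mem_eq_sup' (⟨⟨0, hm⟩, Finset.mem_univ _⟩ :
            (Finset.univ : Finset (Fin m)).Nonempty) (fun i => A i j)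
          have hApos : 0 < A i0 j := by
            have := hβjpos j
            rw [hbe, hi0] at this
            exact this
          have hAi : A i0 j * u j ≤ 1 := by
            have hs : A i0 j * u j ≤ ∑ k, A i0 k * u k :=
              Finset.single_le_sum (fun k _ => mul_nonneg (hA i0 k) (hu k)) (Finset.mem_univ j)
            exact hs.trans (hAu i0)
          rw [hbe, hi0, le_div_iff₀ hApos, mul_comm]
          exact hAi
      refine h1.trans ?_
      gcongr
      exact hβle j
    have h2 : ∑ j, x j * u j ≤ ∑ _j : Fin n, 1 / β := by
      apply Finset.sum_le_sum
      intro j _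
      rcases hx j with h | h
      · rw [h, zero_mul]; positivity
      · rw [h, one_mul]; exact key j
    have h3 : ∑ _j : Fin n, 1 / β = n / β := by
      rw [Finset.sum_const, Finset.card_univ, Fintype.card_fin, nsmul_eq_mul, mul_one_div]
    have h4 : (n : ℝ) / β ≤ (m + n) / β := by
      gcongr
      have h1m : (1:ℝ) ≤ m := by exact_mod_cast hm
      linarith
    linarith
  · obtain ⟨j0, hj0⟩ := Function.ne_iff.1 hx0
    have hxj0 : x j0 = 1 := (hx j0).resolve_left hj0
    refine ⟨fun j => if j = j0 then 1 / βj j0 else 0, ?_, ?_, ?_, ?_⟩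
    · intro j
      dsimp only
      split
      · exact (one_div_pos.2 (hβjpos j0)).le
      · exact le_refl 0
    · intro i
      have hsum : ∑ j, A i j * (if j = j0 then 1 / βj j0 else 0) = A i j0 * (1 / βj j0) := by
        rw [Finset.sum_eq_single j0]
        · rw [if_pos rfl]
        · intro b _ hb; simp [hb]
        · intro h; exact absurd (Finset.mem_univ j0) h
      rw [hsum, mul_one_div, div_le_one (hβjpos j0)]
      refine le_trans ?_ ((hβj j0) ▸ le_max_left _ _)
      exact Finset.le_sup' (fun i => A i j0) (Finset.mem_univ i)
    · intro j
      dsimp only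
      split
      · next h =>
          subst h
          rw [div_le_iff₀ (hβjpos j), mul_comm, ← div_le_iff₀ (hd j), one_div, ← one_div]
          exact (hβj j) ▸ le_max_right _ _
      · exact (hd j).le
    · have hsum : ∑ j, x j * (if j = j0 then 1 / βj j0 else 0) = 1 / βj j0 := by
        rw [Finset.sum_eq_single j0]
        · rw [hxj0, one_mul, if_pos rfl]
        · intro b _ hb; simp [hb]
        · intro h; exact absurd (Finset.mem_univ j0) h
      rw [hsum]
      gcongr
      · exact hβjpos j0
      · exact hγge j0
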